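/- Let r₁ and r₂ be rational numbers with 0 < r₁ ≤ r₂ < 1, let r and r' be rational numbers with 0 < r' ≤ r < 1, and suppose the triple (r₁, r₂, r) is realizable. Then the triple (r₁, r₂, r') is realizable; that is, realizability of (r₁, r₂, ·) is downward closed in the third coordinate. (This monotonicity is the key step in the proof that L-space-ness of S²(-1, r₁, r₂, r) is upward closed in r on (0,1).) -/

import Mathlib

/-- Two sorted triples with the same multiset are equal. -/
lemma sorted_triple_eq (t₁ t₂ t₃ s₁ s₂ s₃ : ℚ)
    (hm : ({t₁, t₂, t₃} : Multiset ℚ) = ({s₁, s₂, s₃} : Multiset ℚ))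
    (ht12 : t₁ ≤ t₂) (ht23 : t₂ ≤ t₃) (hs12 : s₁ ≤ s₂) (hs23 : s₂ ≤ s₃) :
    t₁ = s₁ ∧ t₂ = s₂ ∧ t₃ = s₃ := by
  have hperm : List.Perm [t₁, t₂, t₃] [s₁, s₂, s₃] := by
    rwa [← Multiset.coe_eq_coe]
  have h1 : ([t₁, t₂, t₃] : List ℚ).Pairwise (· ≤ ·) := by
    simp [List.pairwise_cons]
    exact ⟨⟨ht12, ht12.trans ht23⟩, ht23⟩
  have h2 : ([s₁, s₂, s₃] : List ℚ).Pairwise (· ≤ ·) := by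
    simp [List.pairwise_cons]
    exact ⟨⟨hs12, hs12.trans hs23⟩, hs23⟩
  have := List.Perm.eq_of_pairwise' h1 h2 hperm
  simp only [List.cons.injEq, and_true] at this
  tauto

lemma canon_multiset (x y c : ℚ) (hxy : x ≤ y) :
    ({min x c, min y (max x c), max y c} : Multiset ℚ) = ({x, y, c} : Multiset ℚ) := by
  rcases le_total c x with h | h
  · rw [min_eq_right h, max_eq_left h, min_eq_right hxy, max_eq_left (h.trans hxy)]
    show c ::ₘ x ::ₘ y ::ₘ 0 = x ::ₘ y ::ₘ c ::ₘ 0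
    rw [Multiset.cons_swap c x, Multiset.cons_swap c y]
  · rcases le_total c y with h' | h'
    · rw [min_eq_left h, max_eq_right h, min_eq_right h', max_eq_left h']
      show x ::ₘ c ::ₘ y ::ₘ 0 = x ::ₘ y ::ₘ c ::ₘ 0
      rw [Multiset.cons_swap c y]
    · rw [min_eq_left h, max_eq_right h, min_eq_left h', max_eq_right h']

/-- A triple of rationals is *realizable* if there exist relatively prime positive
integers `a`, `k` with `0 < a ≤ k/2` such that the increasing rearrangement
`(t₁, t₂, t₃)` of `(s₁, s₂, s₃)` satisfies `t₁ < 1/k`, `t₂ < a/k`, `t₃ < (k-a)/k`. -/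
def Realizable (s₁ s₂ s₃ : ℚ) : Prop :=
  ∃ a k : ℕ, 0 < a ∧ 2 * a ≤ k ∧ Nat.Coprime a k ∧
    ∃ t₁ t₂ t₃ : ℚ, ({t₁, t₂, t₃} : Multiset ℚ) = ({s₁, s₂, s₃} : Multiset ℚ) ∧
      t₁ ≤ t₂ ∧ t₂ ≤ t₃ ∧
      t₁ < 1 / (k : ℚ) ∧ t₂ < (a : ℚ) / k ∧ t₃ < ((k : ℚ) - (a : ℚ)) / k

/-- Realizability of `(r₁, r₂, ·)` is downward closed in the third coordinate. -/
theorem realizable_downward (r₁ r₂ r r' : ℚ)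
    (h₁ : 0 < r₁) (h₁₂ : r₁ ≤ r₂) (h₂ : r₂ < 1)
    (hr' : 0 < r') (hr'r : r' ≤ r) (hr : r < 1)
    (h : Realizable r₁ r₂ r) :
    Realizable r₁ r₂ r' := by
  obtain ⟨a, k, ha, hak, hcop, t₁, t₂, t₃, hm, h12, h23, hb1, hb2, hb3⟩ := h
  have hv12 : min r₁ r ≤ min r₂ (max r₁ r) :=
    le_min ((min_le_left _ _).trans h₁₂) ((min_le_left _ _).trans (le_max_left _ _))
  have hv23 : min r₂ (max r₁ r) ≤ max r₂ r := (min_le_left _ _).trans (le_max_left _ _)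
  obtain ⟨e1, e2, e3⟩ := sorted_triple_eq t₁ t₂ t₃ (min r₁ r) (min r₂ (max r₁ r)) (max r₂ r)
    (hm.trans (canon_multiset r₁ r₂ r h₁₂).symm) h12 h23 hv12 hv23
  have hb1' : min r₁ r < 1 / (k : ℚ) := e1 ▸ hb1
  have hb2' : min r₂ (max r₁ r) < (a : ℚ) / k := e2 ▸ hb2
  have hb3' : max r₂ r < ((k : ℚ) - a) / k := e3 ▸ hb3
  refine ⟨a, k, ha, hak, hcop, min r₁ r', min r₂ (max r₁ r'), max r₂ r',
    canon_multiset r₁ r₂ r' h₁₂,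
    le_min ((min_le_left _ _).trans h₁₂) ((min_le_left _ _).trans (le_max_left _ _)),
    (min_le_left _ _).trans (le_max_left _ _), ?_, ?_, ?_⟩
  · exact lt_of_le_of_lt (min_le_min le_rfl hr'r) hb1'
  · exact lt_of_le_of_lt (min_le_min le_rfl (max_le_max le_rfl hr'r)) hb2'
  · exact lt_of_le_of_lt (max_le_max le_rfl hr'r) hb3'
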